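/- Let a, b, c be odd positive integers. The lattice Λ = {(x,y,z) ∈ ℤ^3 : x ≡ y (mod a), x ≡ z (mod b), y ≡ −z (mod c)} is generated by the vectors ((c+a)/2, (c−a)/2, (c+a)/2), ((c+b)/2, (c+b)/2, (c−b)/2), and (c, c, c), and its fundamental parallelepiped has volume abc. -/

import Mathlib

def latticeSubgroup (a b c : ℤ) : AddSubgroup (ℤ × ℤ × ℤ) where
  carrier := {p | a ∣ (p.1 - p.2.1) ∧ b ∣ (p.1 - p.2.2) ∧ c ∣ (p.2.1 + p.2.2)}
  zero_mem' := by simp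
  add_mem' := by
    rintro p q ⟨p1, p2, p3⟩ ⟨q1, q2, q3⟩
    refine ⟨?_, ?_, ?_⟩ <;> simp only [Prod.fst_add, Prod.snd_add]
    · convert dvd_add p1 q1 using 1 <;> first | rfl | ring
    · convert dvd_add p2 q2 using 1 <;> first | rfl | ring
    · convert dvd_add p3 q3 using 1 <;> first | rfl | ring
  neg_mem' := by
    rintro p ⟨p1, p2, p3⟩
    refine ⟨?_, ?_, ?_⟩ <;> simp only [Prod.fst_neg, Prod.snd_neg]
    · convert dvd_neg.mpr p1 using 1 <;> first | rfl | ring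
    · convert dvd_neg.mpr p2 using 1 <;> first | rfl | ring
    · convert dvd_neg.mpr p3 using 1 <;> first | rfl | ring

theorem lattice_odd_generators_and_volume (a b c : ℤ)
    (ha : 0 < a) (hb : 0 < b) (hc : 0 < c)
    (hoa : Odd a) (hob : Odd b) (hoc : Odd c) :
    ({p : ℤ × ℤ × ℤ | a ∣ (p.1 - p.2.1) ∧ b ∣ (p.1 - p.2.2) ∧ c ∣ (p.2.1 + p.2.2)}
        = (AddSubgroup.closure
            ({((c + a) / 2, (c - a) / 2, (c + a) / 2),
              ((c + b) / 2, (c + b) / 2, (c - b) / 2),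
              (c, c, c)} : Set (ℤ × ℤ × ℤ)) : Set (ℤ × ℤ × ℤ))) ∧
      |(Matrix.det !![(c + a) / 2, (c - a) / 2, (c + a) / 2;
                      (c + b) / 2, (c + b) / 2, (c - b) / 2;
                      c, c, c])| = a * b * c := by
  obtain ⟨A, hA⟩ := hoa
  obtain ⟨B, hB⟩ := hob
  obtain ⟨C, hC⟩ := hoc
  have h1 : (c + a) / 2 = A + C + 1 := by omega
  have h2 : (c - a) / 2 = C - A := by omega
  have h3 : (c + b) / 2 = B + C + 1 := by omega
  have h4 : (c - b) / 2 = C - B := by omega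
  have ha2 : a % 2 = 1 := by omega
  have hb2 : b % 2 = 1 := by omega
  have hc2 : c % 2 = 1 := by omega
  constructor
  · apply le_antisymm
    · rintro ⟨x, y, z⟩ ⟨⟨m, hm⟩, ⟨n, hn⟩, ⟨l, hl⟩⟩
      dsimp only at hm hn hl
      have e1 : (x - y) % 2 = m % 2 := by rw [hm, Int.mul_emod, ha2, one_mul]; omega
      have e2 : (x - z) % 2 = n % 2 := by rw [hn, Int.mul_emod, hb2, one_mul]; omega
      have e3 : (y + z) % 2 = l % 2 := by rw [hl, Int.mul_emod, hc2, one_mul]; omega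
      obtain ⟨k, hk⟩ : ∃ k, l = m + n + 2 * k := ⟨(l - m - n) / 2, by omega⟩
      subst hk
      rw [hA] at hm; rw [hB] at hn; rw [hC] at hl
      have key : ((x, y, z) : ℤ × ℤ × ℤ)
          = m • (((c + a) / 2, (c - a) / 2, (c + a) / 2) : ℤ × ℤ × ℤ)
            + n • (((c + b) / 2, (c + b) / 2, (c - b) / 2) : ℤ × ℤ × ℤ)
            + k • ((c, c, c) : ℤ × ℤ × ℤ) := by
        rw [h1, h2, h3, h4, hC]
        refine Prod.ext ?_ (Prod.ext ?_ ?_) <;>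
          simp only [Prod.fst_add, Prod.snd_add, Prod.smul_mk, smul_eq_mul] <;>
          linarith [hm, hn, hl]
      rw [key]
      refine add_mem (add_mem ?_ ?_) ?_ <;>
        refine AddSubgroup.zsmul_mem _ (AddSubgroup.subset_closure ?_) _ <;> simp
    · have hP : ({((c + a) / 2, (c - a) / 2, (c + a) / 2),
              ((c + b) / 2, (c + b) / 2, (c - b) / 2),
              ((c : ℤ), c, c)} : Set (ℤ × ℤ × ℤ)) ⊆ (latticeSubgroup a b c : Set (ℤ × ℤ × ℤ)) := by
        rintro p hp
        simp only [Set.mem_insert_iff, Set.mem_singleton_iff] at hp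
        rcases hp with rfl | rfl | rfl
        · exact ⟨⟨1, by show _ - _ = _; dsimp only; omega⟩,
            ⟨0, by show _ - _ = _; dsimp only; omega⟩,
            ⟨1, by show _ + _ = _; dsimp only; omega⟩⟩
        · exact ⟨⟨0, by show _ - _ = _; dsimp only; omega⟩,
            ⟨1, by show _ - _ = _; dsimp only; omega⟩,
            ⟨1, by show _ + _ = _; dsimp only; omega⟩⟩
        · exact ⟨⟨0, by show _ - _ = _; dsimp only; omega⟩,
            ⟨0, by show _ - _ = _; dsimp only; omega⟩,
            ⟨2, by show _ + _ = _; dsimp only; omega⟩⟩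
      exact fun p hp => (AddSubgroup.closure_le _).mpr hP hp
  · have hdet : Matrix.det !![(c + a) / 2, (c - a) / 2, (c + a) / 2;
                      (c + b) / 2, (c + b) / 2, (c - b) / 2;
                      c, c, c] = a * b * c := by
      rw [h1, h2, h3, h4, Matrix.det_fin_three]
      simp [Matrix.cons_val_zero, Matrix.cons_val_one, Matrix.head_cons]
      rw [hA, hB, hC]; ring
    rw [hdet, abs_of_pos (by positivity)]
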